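/- Let x ∈ [0,1]^n be feasible for the strengthened LP of a k-column-sparse packing instance, let α > 0 with αk ≥ 2, and let S include each item i independently with probability x_i/(αk). Let Alt'(T) = { i ∈ T : for every j ∈ N(i), Σ_{i' ∈ T : s_{i'j} ≥ s_{ij}} s_{i'j} ≤ 1 }. Then for every item i ∈ [n]: Pr[i ∈ Alt'(S) | i ∈ S] ≥ ( 1 − (1/(αk)) · (1 + (2/(αk))^{1/3}) )^k. -/

import Mathlib

open Finset
open scoped Classical BigOperators

/-- Probability of the subset `T` under the product distribution on subsets of
`Fin n` with marginal probabilities `q`. -/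
noncomputable def prodP {n : ℕ} (q : Fin n → ℝ) (T : Finset (Fin n)) : ℝ :=
  (∏ i ∈ T, q i) * ∏ i ∈ Tᶜ, (1 - q i)

/-- Probability of an event under the product distribution with marginals `q`. -/
noncomputable def prE {n : ℕ} (q : Fin n → ℝ) (E : Finset (Fin n) → Prop) : ℝ :=
  ∑ T : Finset (Fin n), if E T then prodP q T else 0

/-- The alteration map of the improved algorithm: keep `i ∈ T` iff for every
constraint `j` in which `i` participates, the total size of the items of `T`
that are at least as large as `i` in constraint `j` is at most `1`. -/
noncomputable def altSet' {n m : ℕ} (s : Fin n → Fin m → ℝ) (T : Finset (Fin n)) :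
    Finset (Fin n) :=
  T.filter (fun i => ∀ j, 0 < s i j →
    (∑ i' ∈ T.filter (fun i'' => s i j ≤ s i'' j), s i' j) ≤ 1)

variable {n : ℕ}

lemma sum_prod_compl (u v : Fin n → ℝ) :
    ∑ T : Finset (Fin n), (∏ i ∈ T, u i) * (∏ i ∈ Tᶜ, v i) = ∏ i, (u i + v i) := by
  rw [Finset.prod_add, ← Finset.powerset_univ]
  exact Finset.sum_congr rfl fun T _ => by rw [Finset.compl_eq_univ_sdiff]

lemma prodP_nonneg {q : Fin n → ℝ} (hq : ∀ i, q i ∈ Set.Icc (0:ℝ) 1) (T : Finset (Fin n)) :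
    0 ≤ prodP q T :=
  mul_nonneg (Finset.prod_nonneg fun i _ => (hq i).1)
    (Finset.prod_nonneg fun i _ => by linarith [(hq i).2])

lemma sum_prodP {q : Fin n → ℝ} : ∑ T : Finset (Fin n), prodP q T = 1 := by
  unfold prodP; rw [sum_prod_compl]; simp

lemma prE_nonneg {q : Fin n → ℝ} (hq : ∀ i, q i ∈ Set.Icc (0:ℝ) 1)
    (E : Finset (Fin n) → Prop) : 0 ≤ prE q E := by
  refine Finset.sum_nonneg fun T _ => ?_
  split
  · exact prodP_nonneg hq T
  · exact le_rfl

lemma prE_mono {q : Fin n → ℝ} (hq : ∀ i, q i ∈ Set.Icc (0:ℝ) 1)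
    {E F : Finset (Fin n) → Prop} (h : ∀ T, E T → F T) : prE q E ≤ prE q F := by
  refine Finset.sum_le_sum fun T _ => ?_
  by_cases hE : E T
  · simp [hE, h T hE]
  · simp only [hE, if_false]
    split
    · exact prodP_nonneg hq T
    · exact le_rfl

lemma prE_add_compl {q : Fin n → ℝ} (E : Finset (Fin n) → Prop) :
    prE q E + prE q (fun T => ¬ E T) = 1 := by
  unfold prE
  rw [← Finset.sum_add_distrib, ← sum_prodP (q := q)]
  refine Finset.sum_congr rfl fun T _ => ?_
  by_cases hE : E T <;> simp [hE]

lemma prE_le_one {q : Fin n → ℝ} (hq : ∀ i, q i ∈ Set.Icc (0:ℝ) 1)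
    (E : Finset (Fin n) → Prop) : prE q E ≤ 1 := by
  have := prE_add_compl (q := q) E
  have h2 := prE_nonneg hq (fun T => ¬ E T)
  linarith

lemma prE_subadd {q : Fin n → ℝ} (hq : ∀ i, q i ∈ Set.Icc (0:ℝ) 1)
    {E F G : Finset (Fin n) → Prop} (h : ∀ T, E T → F T ∨ G T) :
    prE q E ≤ prE q F + prE q G := by
  calc prE q E ≤ prE q (fun T => F T ∨ G T) := prE_mono hq h
    _ ≤ prE q F + prE q G := by
        unfold prE
        rw [← Finset.sum_add_distrib]
        refine Finset.sum_le_sum fun T _ => ?_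
        have h0 := prodP_nonneg hq T
        by_cases hF : F T <;> by_cases hG : G T <;> simp [hF, hG] <;> linarith

/-- key marginal: probability that `a ∈ T` is `q a`. -/
lemma prE_mem {q : Fin n → ℝ} (hq : ∀ i, q i ∈ Set.Icc (0:ℝ) 1) (a : Fin n) :
    prE q (fun T => a ∈ T) = q a := by
  have key : prE q (fun T => a ∈ T)
      = ∑ T : Finset (Fin n), (∏ i ∈ T, q i) * ∏ i ∈ Tᶜ, (if i = a then 0 else 1 - q i) := by
    unfold prE
    refine Finset.sum_congr rfl fun T _ => ?_
    by_cases hT : a ∈ T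
    · rw [if_pos hT]
      unfold prodP
      congr 1
      refine Finset.prod_congr rfl fun i hi => ?_
      have : i ≠ a := by rintro rfl; exact (Finset.mem_compl.mp hi) hT
      simp [this]
    · rw [if_neg hT]
      symm
      refine mul_eq_zero_of_right _ ?_
      exact Finset.prod_eq_zero (Finset.mem_compl.mpr hT) (by simp)
  rw [key, sum_prod_compl, Finset.prod_eq_single a]
  · simp
  · intro b _ hb; simp [hb]
  · simp

/-- pair marginal. -/
lemma prE_pair {q : Fin n → ℝ} (hq : ∀ i, q i ∈ Set.Icc (0:ℝ) 1) {a b : Fin n} (hab : a ≠ b) :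
    prE q (fun T => a ∈ T ∧ b ∈ T) = q a * q b := by
  have key : prE q (fun T => a ∈ T ∧ b ∈ T)
      = ∑ T : Finset (Fin n), (∏ i ∈ T, q i) * ∏ i ∈ Tᶜ, (if i = a ∨ i = b then 0 else 1 - q i) := by
    unfold prE
    refine Finset.sum_congr rfl fun T _ => ?_
    by_cases hT : a ∈ T ∧ b ∈ T
    · rw [if_pos hT]
      unfold prodP
      congr 1
      refine Finset.prod_congr rfl fun i hi => ?_
      have h1 : i ≠ a := by rintro rfl; exact (Finset.mem_compl.mp hi) hT.1
      have h2 : i ≠ b := by rintro rfl; exact (Finset.mem_compl.mp hi) hT.2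
      simp [h1, h2]
    · rw [if_neg hT]
      symm
      refine mul_eq_zero_of_right _ ?_
      rcases not_and_or.mp hT with h | h
      · exact Finset.prod_eq_zero (Finset.mem_compl.mpr h) (by simp)
      · exact Finset.prod_eq_zero (Finset.mem_compl.mpr h) (by simp)
  rw [key, sum_prod_compl]
  rw [← Finset.prod_subset (Finset.subset_univ ({a, b} : Finset (Fin n))) (fun i _ hi => ?_)]
  · rw [Finset.prod_pair hab]
    have ha : (a = a ∨ a = b) := Or.inl rfl
    have hb : (b = a ∨ b = b) := Or.inr rfl
    simp [ha, hb]
  · have h1 : i ≠ a := fun h => hi (by simp [h])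
    have h2 : i ≠ b := fun h => hi (by simp [h])
    simp [h1, h2]

/-- raw-sum version of `prE_mem`, with the ambient decidability instance. -/
lemma sum_ite_mem {q : Fin n → ℝ} (hq : ∀ i, q i ∈ Set.Icc (0:ℝ) 1) (a : Fin n) :
    ∑ T : Finset (Fin n), (if a ∈ T then prodP q T else 0) = q a := by
  have h := prE_mem hq a
  unfold prE at h
  rw [← h]
  exact Finset.sum_congr rfl fun T _ => by by_cases hT : a ∈ T <;> simp [hT]

/-- expectation of a nonneg weight restricted to membership. -/
lemma sum_ite_mem_prodP {q : Fin n → ℝ} (hq : ∀ i, q i ∈ Set.Icc (0:ℝ) 1) (a : Fin n) (c : ℝ) :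
    ∑ T : Finset (Fin n), (if a ∈ T then prodP q T * c else 0) = q a * c := by
  have : ∀ T : Finset (Fin n), (if a ∈ T then prodP q T * c else 0)
      = (if a ∈ T then prodP q T else 0) * c := by
    intro T; by_cases hT : a ∈ T <;> simp [hT]
  rw [Finset.sum_congr rfl fun T _ => this T, ← Finset.sum_mul, sum_ite_mem hq]

/-- union bound over a finite index set. -/
lemma prE_exists_le {q : Fin n → ℝ} (hq : ∀ i, q i ∈ Set.Icc (0:ℝ) 1) (W : Finset (Fin n)) :
    prE q (fun T => ∃ a ∈ W, a ∈ T) ≤ ∑ a ∈ W, q a := by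
  have key : prE q (fun T => ∃ a ∈ W, a ∈ T)
      ≤ ∑ T : Finset (Fin n), ∑ a ∈ W, (if a ∈ T then prodP q T else 0) := by
    unfold prE
    refine Finset.sum_le_sum fun T _ => ?_
    by_cases hE : ∃ a ∈ W, a ∈ T
    · rw [if_pos hE]
      obtain ⟨a, haW, haT⟩ := hE
      calc prodP q T = (if a ∈ T then prodP q T else 0) := by rw [if_pos haT]
        _ ≤ ∑ b ∈ W, (if b ∈ T then prodP q T else 0) := by
            refine Finset.single_le_sum (f := fun b => if b ∈ T then prodP q T else 0) (fun b _ => ?_) haW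
            split
            · exact prodP_nonneg hq T
            · exact le_rfl
    · rw [if_neg hE]
      refine Finset.sum_nonneg fun a _ => ?_
      split
      · exact prodP_nonneg hq T
      · exact le_rfl
  rw [Finset.sum_comm] at key
  calc prE q (fun T => ∃ a ∈ W, a ∈ T) ≤ _ := key
    _ = ∑ a ∈ W, q a := Finset.sum_congr rfl fun a _ => sum_ite_mem hq a

lemma sum_ite_pair {q : Fin n → ℝ} (hq : ∀ i, q i ∈ Set.Icc (0:ℝ) 1) {a b : Fin n} (hab : a ≠ b) :
    ∑ T : Finset (Fin n), (if a ∈ T ∧ b ∈ T then prodP q T else 0) = q a * q b := by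
  have h := prE_pair hq hab
  unfold prE at h
  rw [← h]
  exact Finset.sum_congr rfl fun T _ => by by_cases hT : a ∈ T ∧ b ∈ T <;> simp [hT]

/-- second-moment bound: probability of two distinct elements of `M` in `T`. -/
lemma prE_two_le {q : Fin n → ℝ} (hq : ∀ i, q i ∈ Set.Icc (0:ℝ) 1) (M : Finset (Fin n)) :
    prE q (fun T => ∃ a ∈ M, ∃ b ∈ M, a ≠ b ∧ a ∈ T ∧ b ∈ T) ≤ (∑ a ∈ M, q a) ^ 2 / 2 := by
  have key : 2 * prE q (fun T => ∃ a ∈ M, ∃ b ∈ M, a ≠ b ∧ a ∈ T ∧ b ∈ T)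
      ≤ ∑ T : Finset (Fin n), ∑ p ∈ M.offDiag, (if p.1 ∈ T ∧ p.2 ∈ T then prodP q T else 0) := by
    unfold prE
    rw [Finset.mul_sum]
    refine Finset.sum_le_sum fun T _ => ?_
    by_cases hE : ∃ a ∈ M, ∃ b ∈ M, a ≠ b ∧ a ∈ T ∧ b ∈ T
    · rw [if_pos hE]
      obtain ⟨a, haM, b, hbM, hab, haT, hbT⟩ := hE
      have hsub : ({(a,b), (b,a)} : Finset (Fin n × Fin n)) ⊆ M.offDiag := by
        intro p hp
        rcases Finset.mem_insert.mp hp with rfl | hp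
        · exact Finset.mem_offDiag.mpr ⟨haM, hbM, hab⟩
        · rw [Finset.mem_singleton.mp hp]
          exact Finset.mem_offDiag.mpr ⟨hbM, haM, hab.symm⟩
      have hne : ((a,b) : Fin n × Fin n) ≠ (b,a) := by
        intro h; exact hab (congrArg Prod.fst h)
      calc 2 * prodP q T
          = ∑ p ∈ ({(a,b), (b,a)} : Finset (Fin n × Fin n)),
              (if p.1 ∈ T ∧ p.2 ∈ T then prodP q T else 0) := by
            rw [Finset.sum_pair hne]
            simp only [if_pos (And.intro haT hbT), if_pos (And.intro hbT haT)]
            ring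
        _ ≤ ∑ p ∈ M.offDiag, (if p.1 ∈ T ∧ p.2 ∈ T then prodP q T else 0) := by
            refine Finset.sum_le_sum_of_subset_of_nonneg hsub fun p _ _ => ?_
            split
            · exact prodP_nonneg hq T
            · exact le_rfl
    · rw [if_neg hE, mul_zero]
      refine Finset.sum_nonneg fun p _ => ?_
      split
      · exact prodP_nonneg hq T
      · exact le_rfl
  rw [Finset.sum_comm] at key
  have key2 : ∑ p ∈ M.offDiag, ∑ T : Finset (Fin n),
      (if p.1 ∈ T ∧ p.2 ∈ T then prodP q T else 0) = ∑ p ∈ M.offDiag, q p.1 * q p.2 := by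
    refine Finset.sum_congr rfl fun p hp => ?_
    exact sum_ite_pair hq (Finset.mem_offDiag.mp hp).2.2
  rw [key2] at key
  have key3 : ∑ p ∈ M.offDiag, q p.1 * q p.2 ≤ (∑ a ∈ M, q a) ^ 2 := by
    rw [sq, Finset.sum_mul_sum, ← Finset.sum_product']
    refine Finset.sum_le_sum_of_subset_of_nonneg ?_ fun p _ _ => mul_nonneg (hq p.1).1 (hq p.2).1
    intro p hp
    have := Finset.mem_offDiag.mp hp
    exact Finset.mem_product.mpr ⟨this.1, this.2.1⟩
  linarith

/-- Markov's inequality for a weighted membership sum. -/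
lemma prE_markov {q : Fin n → ℝ} (hq : ∀ i, q i ∈ Set.Icc (0:ℝ) 1) (W : Finset (Fin n))
    (w : Fin n → ℝ) (hw : ∀ a ∈ W, 0 ≤ w a) (lam : ℝ) (hlam : 0 < lam) :
    prE q (fun T => lam < ∑ a ∈ W, (if a ∈ T then w a else 0))
      ≤ (∑ a ∈ W, w a * q a) / lam := by
  rw [le_div_iff₀ hlam, mul_comm]
  have key : lam * prE q (fun T => lam < ∑ a ∈ W, (if a ∈ T then w a else 0))
      ≤ ∑ T : Finset (Fin n), ∑ a ∈ W, (if a ∈ T then prodP q T * w a else 0) := by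
    unfold prE
    rw [Finset.mul_sum]
    refine Finset.sum_le_sum fun T _ => ?_
    have hinner : ∀ T : Finset (Fin n),
        ∑ a ∈ W, (if a ∈ T then prodP q T * w a else 0)
          = prodP q T * ∑ a ∈ W, (if a ∈ T then w a else 0) := by
      intro T
      rw [Finset.mul_sum]
      refine Finset.sum_congr rfl fun a _ => ?_
      by_cases hT : a ∈ T <;> simp [hT]
    rw [hinner]
    have hX : (0:ℝ) ≤ ∑ a ∈ W, (if a ∈ T then w a else 0) := by
      refine Finset.sum_nonneg fun a ha => ?_
      split
      · exact hw a ha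
      · exact le_rfl
    by_cases hE : lam < ∑ a ∈ W, (if a ∈ T then w a else 0)
    · rw [if_pos hE]
      rw [mul_comm]
      exact mul_le_mul_of_nonneg_left hE.le (prodP_nonneg hq T)
    · rw [if_neg hE, mul_zero]
      exact mul_nonneg (prodP_nonneg hq T) hX
  rw [Finset.sum_comm] at key
  calc lam * _ ≤ _ := key
    _ = ∑ a ∈ W, w a * q a := by
        refine Finset.sum_congr rfl fun a _ => ?_
        rw [sum_ite_mem_prodP hq]
        ring

lemma prodP_supermodular (q : Fin n → ℝ) (S T : Finset (Fin n)) :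
    prodP q S * prodP q T = prodP q (S ∩ T) * prodP q (S ∪ T) := by
  unfold prodP
  have h1 : (∏ i ∈ S ∪ T, q i) * ∏ i ∈ S ∩ T, q i = (∏ i ∈ S, q i) * ∏ i ∈ T, q i :=
    Finset.prod_union_inter
  have h2 : (∏ i ∈ Sᶜ ∪ Tᶜ, (1 - q i)) * ∏ i ∈ Sᶜ ∩ Tᶜ, (1 - q i)
      = (∏ i ∈ Sᶜ, (1 - q i)) * ∏ i ∈ Tᶜ, (1 - q i) := Finset.prod_union_inter
  rw [Finset.compl_inter, Finset.compl_union, mul_mul_mul_comm, ← h1, ← h2]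
  ring

lemma prE_congr_iff {q : Fin n → ℝ} {E F : Finset (Fin n) → Prop} (h : ∀ T, E T ↔ F T) :
    prE q E = prE q F := by
  unfold prE
  refine Finset.sum_congr rfl fun T _ => ?_
  by_cases hE : E T
  · rw [if_pos hE, if_pos ((h T).mp hE)]
  · rw [if_neg hE, if_neg (fun hF => hE ((h T).mpr hF))]

lemma prE_true {q : Fin n → ℝ} : prE q (fun _ => True) = 1 := by
  unfold prE
  simpa using sum_prodP (q := q)

/-- FKG / Harris inequality for two decreasing events. -/
lemma fkg_two {q : Fin n → ℝ} (hq : ∀ i, q i ∈ Set.Icc (0:ℝ) 1)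
    {A B : Finset (Fin n) → Prop}
    (hA : ∀ ⦃T T'⦄, T ⊆ T' → A T' → A T) (hB : ∀ ⦃T T'⦄, T ⊆ T' → B T' → B T) :
    prE q A * prE q B ≤ prE q (fun T => A T ∧ B T) := by
  classical
  set μ : (Finset (Fin n))ᵒᵈ → ℝ := fun T => prodP q (OrderDual.ofDual T) with hμdef
  set f : (Finset (Fin n))ᵒᵈ → ℝ :=
    fun T => if A (OrderDual.ofDual T) then 1 else 0 with hfdef
  set g : (Finset (Fin n))ᵒᵈ → ℝ :=
    fun T => if B (OrderDual.ofDual T) then 1 else 0 with hgdef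
  have hμ₀ : 0 ≤ μ := fun T => prodP_nonneg hq _
  have hf₀ : 0 ≤ f := fun T => by dsimp [f]; split <;> norm_num
  have hg₀ : 0 ≤ g := fun T => by dsimp [g]; split <;> norm_num
  have hf : Monotone f := by
    intro a b hab
    have hsub : OrderDual.ofDual b ⊆ OrderDual.ofDual a :=
      Finset.le_iff_subset.mp (OrderDual.ofDual_le_ofDual.mpr hab)
    dsimp [f]
    by_cases hAa : A (OrderDual.ofDual a)
    · rw [if_pos hAa, if_pos (hA hsub hAa)]
    · rw [if_neg hAa]
      split <;> norm_num
  have hg : Monotone g := by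
    intro a b hab
    have hsub : OrderDual.ofDual b ⊆ OrderDual.ofDual a :=
      Finset.le_iff_subset.mp (OrderDual.ofDual_le_ofDual.mpr hab)
    dsimp [g]
    by_cases hBa : B (OrderDual.ofDual a)
    · rw [if_pos hBa, if_pos (hB hsub hBa)]
    · rw [if_neg hBa]
      split <;> norm_num
  have hμ : ∀ a b, μ a * μ b ≤ μ (a ⊓ b) * μ (a ⊔ b) := by
    intro a b
    dsimp [μ]
    rw [prodP_supermodular q (OrderDual.ofDual a) (OrderDual.ofDual b)]
    apply le_of_eq
    ring
  have key := fkg (μ := μ) (f := f) (g := g) hμ₀ hf₀ hg₀ hf hg hμ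
  have e1 : ∑ a, μ a * f a = prE q A := by
    rw [← Equiv.sum_comp (OrderDual.toDual (α := Finset (Fin n))) (fun a => μ a * f a)]
    unfold prE
    refine Finset.sum_congr rfl fun T _ => ?_
    dsimp [μ, f]
    by_cases hAa : A T
    · simp [hAa]
    · simp [hAa]
  have e2 : ∑ a, μ a * g a = prE q B := by
    rw [← Equiv.sum_comp (OrderDual.toDual (α := Finset (Fin n))) (fun a => μ a * g a)]
    unfold prE
    refine Finset.sum_congr rfl fun T _ => ?_
    dsimp [μ, g]
    by_cases hBa : B T
    · simp [hBa]
    · simp [hBa]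
  have e3 : ∑ a, μ a = (1:ℝ) := by
    rw [← Equiv.sum_comp (OrderDual.toDual (α := Finset (Fin n))) μ]
    exact sum_prodP
  have e4 : ∑ a, μ a * (f a * g a) = prE q (fun T => A T ∧ B T) := by
    rw [← Equiv.sum_comp (OrderDual.toDual (α := Finset (Fin n)))
      (fun a => μ a * (f a * g a))]
    unfold prE
    refine Finset.sum_congr rfl fun T _ => ?_
    dsimp [μ, f, g]
    by_cases hAa : A T <;> by_cases hBa : B T
    · simp [hAa, hBa]
    · simp [hAa, hBa]
    · simp [hAa, hBa]
    · simp [hAa, hBa]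
  rw [e1, e2, e3, e4] at key
  linarith

/-- FKG for finitely many decreasing events. -/
lemma fkg_prod {m : ℕ} {q : Fin n → ℝ} (hq : ∀ i, q i ∈ Set.Icc (0:ℝ) 1)
    (A : Fin m → Finset (Fin n) → Prop)
    (hA : ∀ j, ∀ ⦃T T' : Finset (Fin n)⦄, T ⊆ T' → A j T' → A j T)
    (J : Finset (Fin m)) :
    ∏ j ∈ J, prE q (A j) ≤ prE q (fun T => ∀ j ∈ J, A j T) := by
  induction J using Finset.induction_on with
  | empty =>
      simp only [Finset.prod_empty]
      rw [prE_congr_iff (F := fun _ => True) (by simp), prE_true]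
  | @insert j J hj ih =>
      rw [Finset.prod_insert hj]
      have hAJ : ∀ ⦃T T' : Finset (Fin n)⦄, T ⊆ T' →
          (∀ j' ∈ J, A j' T') → (∀ j' ∈ J, A j' T) :=
        fun T T' hsub h j' hj' => hA j' hsub (h j' hj')
      calc prE q (A j) * ∏ j' ∈ J, prE q (A j')
          ≤ prE q (A j) * prE q (fun T => ∀ j' ∈ J, A j' T) := by
            refine mul_le_mul_of_nonneg_left ih (prE_nonneg hq _)
        _ ≤ prE q (fun T => A j T ∧ ∀ j' ∈ J, A j' T) := fkg_two hq (hA j) hAJ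
        _ = prE q (fun T => ∀ j' ∈ insert j J, A j' T) := by
            refine prE_congr_iff fun T => ?_
            simp only [Finset.mem_insert]
            constructor
            · rintro ⟨h1, h2⟩ j' (rfl | hj')
              · exact h1
              · exact h2 j' hj'
            · intro h
              exact ⟨h j (Or.inl rfl), fun j' hj' => h j' (Or.inr hj')⟩

set_option maxHeartbeats 1000000 in
/-- Per-constraint bound: under the conditional measure (`q' i = 1`), the
probability that constraint `j` does not kill `i` is at least
`1 - C(1+t)`. -/
lemma constraint_bound {n m : ℕ} (s : Fin n → Fin m → ℝ)
    (hs : ∀ i j, s i j ∈ Set.Icc (0:ℝ) 1)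
    (x : Fin n → ℝ) (hx : ∀ i, x i ∈ Set.Icc (0:ℝ) 1)
    (hLP : ∀ j, ∑ i, s i j * x i ≤ 1)
    (hLPbig : ∀ j, ∑ i ∈ univ.filter (fun i => 1/2 < s i j), x i ≤ 1)
    (α : ℝ) (hα : 0 < α) (k : ℕ) (hαk : 2 ≤ α * k)
    (i : Fin n) (q' : Fin n → ℝ) (hq'i : q' i = 1)
    (hq' : ∀ i', i' ≠ i → q' i' = x i' / (α * k))
    (hq'b : ∀ i', q' i' ∈ Set.Icc (0:ℝ) 1)
    (j : Fin m) (hj : 0 < s i j) :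
    1 - (1 / (α * k)) * (1 + (2 / (α * k)) ^ ((1:ℝ)/3))
      ≤ prE q' (fun T => (∑ i' ∈ T.filter (fun i'' => s i j ≤ s i'' j), s i' j) ≤ 1) := by
  have hαk0 : (0:ℝ) < α * k := lt_of_lt_of_le (by norm_num) hαk
  set C : ℝ := 1 / (α * k) with hCdef
  set t : ℝ := (2 / (α * k)) ^ ((1:ℝ)/3) with htdef
  have hC0 : 0 < C := by positivity
  have hC2 : C ≤ 1/2 := by
    rw [hCdef, div_le_div_iff₀ hαk0 (by norm_num)]
    linarith
  have h2C : 2 / (α * k) = 2 * C := by rw [hCdef]; ring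
  have h2C1 : 2 * C ≤ 1 := by linarith
  have ht0 : 0 < t := by
    rw [htdef]
    exact Real.rpow_pos_of_pos (by positivity) _
  have ht1 : t ≤ 1 := by
    rw [htdef, h2C]
    exact Real.rpow_le_one (by positivity) h2C1 (by norm_num)
  have ht3 : t * t * t = 2 * C := by
    have h3 : ((2*C) ^ ((1:ℝ)/3)) ^ (3:ℕ) = 2*C := by
      rw [← Real.rpow_natCast ((2*C) ^ ((1:ℝ)/3)) 3, ← Real.rpow_mul (by positivity)]
      norm_num
    calc t * t * t = t ^ (3:ℕ) := by ring
      _ = 2*C := by rw [htdef, h2C]; exact h3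
  set θ : ℝ := t / (1 + t) with hθdef
  have h1t : (0:ℝ) < 1 + t := by linarith
  have hθt : θ * (1 + t) = t := by rw [hθdef]; field_simp
  have hθ0 : 0 < θ := by rw [hθdef]; positivity
  have hθhalf : θ ≤ 1/2 := by
    rw [hθdef, div_le_div_iff₀ h1t (by norm_num)]
    linarith
  set a : ℝ := s i j with hadef
  have ha0 : 0 < a := hj
  have ha1 : a ≤ 1 := (hs i j).2
  -- the complement event bound
  suffices hcompl : prE q' (fun T =>
      ¬ ((∑ i' ∈ T.filter (fun i'' => s i j ≤ s i'' j), s i' j) ≤ 1)) ≤ C * (1 + t) by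
    have := prE_add_compl (q := q')
      (fun T => (∑ i' ∈ T.filter (fun i'' => s i j ≤ s i'' j), s i' j) ≤ 1)
    linarith
  -- the erase fact
  have key_erase : ∀ T : Finset (Fin n),
      ¬ ((∑ i' ∈ T.filter (fun i'' => s i j ≤ s i'' j), s i' j) ≤ 1) →
      1 - a < ∑ b ∈ (T.filter (fun i'' => s i j ≤ s i'' j)).erase i, s b j := by
    intro T hT
    push_neg at hT
    by_cases hiT : i ∈ T.filter (fun i'' => s i j ≤ s i'' j)
    · have h := Finset.add_sum_erase _ (fun b => s b j) hiT
      rw [← hadef] at h ⊢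
      linarith
    · rw [Finset.erase_eq_of_notMem hiT]
      linarith
  -- the big-item set and its probability
  set Bset : Finset (Fin n) := univ.filter (fun i' => i' ≠ i ∧ 1/2 < s i' j) with hBdef
  have hBsum : ∑ b ∈ Bset, q' b ≤ C := by
    have h1 : ∑ b ∈ Bset, q' b = (∑ b ∈ Bset, x b) / (α * k) := by
      rw [Finset.sum_div]
      refine Finset.sum_congr rfl fun b hb => ?_
      rw [hBdef, Finset.mem_filter] at hb
      exact hq' b hb.2.1
    have h2 : ∑ b ∈ Bset, x b ≤ 1 := by
      refine le_trans (Finset.sum_le_sum_of_subset_of_nonneg ?_ fun b _ _ => (hx b).1)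
        (hLPbig j)
      intro b hb
      rw [hBdef, Finset.mem_filter] at hb
      exact Finset.mem_filter.mpr ⟨Finset.mem_univ _, hb.2.2⟩
    rw [h1, hCdef]
    gcongr
  have hBev_le : prE q' (fun T => ∃ b ∈ Bset, b ∈ T) ≤ C :=
    le_trans (prE_exists_le hq'b Bset) hBsum
  rcases lt_or_ge (1/2 : ℝ) a with hbig | hsmall
  · -- Case A : `i` is big for `j`
    calc prE q' (fun T => ¬ ((∑ i' ∈ T.filter (fun i'' => s i j ≤ s i'' j), s i' j) ≤ 1))
        ≤ prE q' (fun T => ∃ b ∈ Bset, b ∈ T) := by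
          refine prE_mono hq'b fun T hT => ?_
          by_contra hBev
          apply hT
          have hsub : T.filter (fun i'' => s i j ≤ s i'' j) ⊆ {i} := by
            intro b hb
            rw [Finset.mem_filter] at hb
            rw [Finset.mem_singleton]
            by_contra hbne
            exact hBev ⟨b, Finset.mem_filter.mpr
              ⟨Finset.mem_univ _, hbne, lt_of_lt_of_le hbig hb.2⟩, hb.1⟩
          rcases Finset.subset_singleton_iff.mp hsub with h | h <;> rw [h]
          · simp
          · rw [Finset.sum_singleton]
            exact ha1
      _ ≤ C := hBev_le
      _ ≤ C * (1 + t) := by nlinarith [hC0, ht0]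
  rcases lt_or_ge θ a with hath | hath
  · -- Case B : `θ < a ≤ 1/2`
    set M : Finset (Fin n) :=
      univ.filter (fun i' => i' ≠ i ∧ s i j ≤ s i' j ∧ s i' j ≤ 1/2) with hMdef
    set σ : ℝ := ∑ b ∈ M, q' b with hσdef
    have hσ0 : 0 ≤ σ := Finset.sum_nonneg fun b _ => (hq'b b).1
    have hσa : σ * a ≤ C := by
      have h1 : ∀ b ∈ M, q' b * a ≤ (s b j * x b) * C := by
        intro b hb
        rw [hMdef, Finset.mem_filter] at hb
        rw [hq' b hb.2.1]
        have hax : a * x b ≤ s b j * x b := mul_le_mul_of_nonneg_right hb.2.2.1 (hx b).1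
        calc x b / (α * k) * a = (a * x b) * (1/(α*k)) := by ring
          _ ≤ (s b j * x b) * (1/(α*k)) := mul_le_mul_of_nonneg_right hax (by positivity)
          _ = (s b j * x b) * C := by rw [hCdef]
      calc σ * a = ∑ b ∈ M, q' b * a := by rw [hσdef, Finset.sum_mul]
        _ ≤ ∑ b ∈ M, (s b j * x b) * C := Finset.sum_le_sum h1
        _ = (∑ b ∈ M, s b j * x b) * C := by rw [Finset.sum_mul]
        _ ≤ (∑ b, s b j * x b) * C := by
            refine mul_le_mul_of_nonneg_right
              (Finset.sum_le_sum_of_subset_of_nonneg (Finset.subset_univ M)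
                (fun b _ _ => mul_nonneg (hs b j).1 (hx b).1)) hC0.le
        _ ≤ 1 * C := mul_le_mul_of_nonneg_right (hLP j) hC0.le
        _ = C := one_mul C
    have himp : ∀ T : Finset (Fin n),
        ¬ ((∑ i' ∈ T.filter (fun i'' => s i j ≤ s i'' j), s i' j) ≤ 1) →
        (∃ b ∈ Bset, b ∈ T) ∨ (∃ b ∈ M, ∃ c ∈ M, b ≠ c ∧ b ∈ T ∧ c ∈ T) := by
      intro T hT
      by_cases hBev : ∃ b ∈ Bset, b ∈ T
      · exact Or.inl hBev
      · right
        have h1 := key_erase T hT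
        have hsubM : ∀ b ∈ (T.filter (fun i'' => s i j ≤ s i'' j)).erase i,
            b ∈ M ∧ b ∈ T := by
          intro b hb
          have hbne : b ≠ i := Finset.ne_of_mem_erase hb
          have hbf := Finset.mem_filter.mp (Finset.mem_of_mem_erase hb)
          have hb2 : s b j ≤ 1/2 := by
            by_contra hc
            push_neg at hc
            exact hBev ⟨b, Finset.mem_filter.mpr ⟨Finset.mem_univ _, hbne, hc⟩, hbf.1⟩
          exact ⟨Finset.mem_filter.mpr ⟨Finset.mem_univ _, hbne, hbf.2, hb2⟩, hbf.1⟩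
        by_contra hpair
        have hcard : ((T.filter (fun i'' => s i j ≤ s i'' j)).erase i).card ≤ 1 := by
          rw [Finset.card_le_one]
          intro b hb c hc
          by_contra hbc
          obtain ⟨hbM, hbT⟩ := hsubM b hb
          obtain ⟨hcM, hcT⟩ := hsubM c hc
          exact hpair ⟨b, hbM, c, hcM, hbc, hbT, hcT⟩
        have hsum' : ∑ b ∈ (T.filter (fun i'' => s i j ≤ s i'' j)).erase i, s b j
            ≤ ((T.filter (fun i'' => s i j ≤ s i'' j)).erase i).card • (1/2:ℝ) :=
          Finset.sum_le_card_nsmul _ _ _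
            (fun b hb => (Finset.mem_filter.mp ((hsubM b hb).1)).2.2.2)
        rw [nsmul_eq_mul] at hsum'
        have hcard' : (((T.filter (fun i'' => s i j ≤ s i'' j)).erase i).card : ℝ) ≤ 1 := by
          exact_mod_cast hcard
        nlinarith [h1, hsum', hcard', hsmall]
    have e2 : 2*θ*θ*t*((1+t)*(1+t)) = 4*C := by
      calc 2*θ*θ*t*((1+t)*(1+t)) = 2*((θ*(1+t))*(θ*(1+t)))*t := by ring
        _ = 2*(t*t)*t := by rw [hθt]
        _ = 4*C := by rw [show (2:ℝ)*(t*t)*t = 2*(t*t*t) from by ring, ht3]; ring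
    have e3 : (1+t)*(1+t) ≤ 4 := by nlinarith [ht0, ht1]
    have hP : 0 ≤ 2*θ*θ*t :=
      mul_nonneg (mul_nonneg (mul_nonneg (by norm_num) hθ0.le) hθ0.le) ht0.le
    have e4 : C ≤ 2*θ*θ*t := by nlinarith [e2, e3, hP]
    have h2at : C ≤ 2*a*a*t := by
      have hθa2 : θ*θ*t ≤ a*a*t :=
        mul_le_mul_of_nonneg_right
          (mul_le_mul hath.le hath.le hθ0.le ha0.le) ht0.le
      linarith [e4, hθa2]
    have hsq : (σ*a)*(σ*a) ≤ C*C :=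
      mul_le_mul hσa hσa (mul_nonneg hσ0 ha0.le) hC0.le
    have hσ2 : σ^2/2 ≤ C*t := by nlinarith [hsq, h2at, ha0, hC0, ht0, hσ0]
    calc prE q' (fun T => ¬ ((∑ i' ∈ T.filter (fun i'' => s i j ≤ s i'' j), s i' j) ≤ 1))
        ≤ prE q' (fun T => ∃ b ∈ Bset, b ∈ T)
            + prE q' (fun T => ∃ b ∈ M, ∃ c ∈ M, b ≠ c ∧ b ∈ T ∧ c ∈ T) :=
          prE_subadd hq'b himp
      _ ≤ C + σ^2/2 := add_le_add hBev_le (prE_two_le hq'b M)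
      _ ≤ C + C*t := by linarith [hσ2]
      _ = C * (1+t) := by ring
  · -- Case C : `a ≤ θ`, Markov
    set W : Finset (Fin n) := univ.filter (fun i' => i' ≠ i ∧ s i j ≤ s i' j) with hWdef
    have h1a : 0 < 1 - a := by
      have : a ≤ 1/2 := le_trans hath hθhalf
      linarith
    have hWsum : ∑ b ∈ W, s b j * q' b ≤ C := by
      have h1 : ∀ b ∈ W, s b j * q' b ≤ (s b j * x b) * C := by
        intro b hb
        rw [hWdef, Finset.mem_filter] at hb
        rw [hq' b hb.2.1, hCdef]
        have := mul_nonneg (hs b j).1 (hx b).1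
        calc s b j * (x b / (α * k)) = (s b j * x b) * (1/(α*k)) := by ring
          _ ≤ (s b j * x b) * (1/(α*k)) := le_rfl
      calc ∑ b ∈ W, s b j * q' b ≤ ∑ b ∈ W, (s b j * x b) * C := Finset.sum_le_sum h1
        _ = (∑ b ∈ W, s b j * x b) * C := by rw [Finset.sum_mul]
        _ ≤ (∑ b, s b j * x b) * C := by
            refine mul_le_mul_of_nonneg_right
              (Finset.sum_le_sum_of_subset_of_nonneg (Finset.subset_univ W)
                (fun b _ _ => mul_nonneg (hs b j).1 (hx b).1)) hC0.le
        _ ≤ 1 * C := mul_le_mul_of_nonneg_right (hLP j) hC0.le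
        _ = C := one_mul C
    have himp : ∀ T : Finset (Fin n),
        ¬ ((∑ i' ∈ T.filter (fun i'' => s i j ≤ s i'' j), s i' j) ≤ 1) →
        1 - a < ∑ b ∈ W, (if b ∈ T then s b j else 0) := by
      intro T hT
      have h1 := key_erase T hT
      have heq : ∑ b ∈ W, (if b ∈ T then s b j else 0)
          = ∑ b ∈ (T.filter (fun i'' => s i j ≤ s i'' j)).erase i, s b j := by
        rw [Finset.sum_ite_mem]
        refine Finset.sum_congr ?_ fun b _ => rfl
        ext b
        rw [Finset.mem_inter, hWdef, Finset.mem_filter, Finset.mem_erase, Finset.mem_filter]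
        constructor
        · rintro ⟨⟨_, hne, hle⟩, hbT⟩
          exact ⟨hne, hbT, hle⟩
        · rintro ⟨hne, hbT, hle⟩
          exact ⟨⟨Finset.mem_univ _, hne, hle⟩, hbT⟩
      rw [heq]
      exact h1
    calc prE q' (fun T => ¬ ((∑ i' ∈ T.filter (fun i'' => s i j ≤ s i'' j), s i' j) ≤ 1))
        ≤ prE q' (fun T => 1 - a < ∑ b ∈ W, (if b ∈ T then s b j else 0)) :=
          prE_mono hq'b himp
      _ ≤ (∑ b ∈ W, s b j * q' b)/(1-a) :=
          prE_markov hq'b W (fun b => s b j) (fun b _ => (hs b j).1) (1-a) h1a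
      _ ≤ C/(1-a) := by gcongr
      _ ≤ C*(1+t) := by
          rw [div_le_iff₀ h1a]
          have hkey : 1 ≤ (1+t)*(1-a) := by nlinarith [hθt, hath, ht0, h1t]
          nlinarith [hC0, hkey]

lemma prodP_update_one {n : ℕ} {q : Fin n → ℝ} {i : Fin n} {T : Finset (Fin n)} (hiT : i ∈ T) :
    prodP q T = q i * prodP (Function.update q i 1) T := by
  unfold prodP
  have h1 : ∏ b ∈ T, q b = q i * ∏ b ∈ T.erase i, q b := (Finset.mul_prod_erase T q hiT).symm
  have h2 : ∏ b ∈ T, Function.update q i 1 b = ∏ b ∈ T.erase i, q b := by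
    rw [← Finset.mul_prod_erase T _ hiT, Function.update_self, one_mul]
    exact Finset.prod_congr rfl fun b hb => Function.update_of_ne (Finset.ne_of_mem_erase hb) _ _
  have h3 : ∏ b ∈ Tᶜ, (1 - Function.update q i 1 b) = ∏ b ∈ Tᶜ, (1 - q b) := by
    refine Finset.prod_congr rfl fun b hb => ?_
    have hbi : b ≠ i := by rintro rfl; exact (Finset.mem_compl.mp hb) hiT
    rw [Function.update_of_ne hbi]
  rw [h1, h2, h3]
  ring

lemma prE_cond {n : ℕ} {q : Fin n → ℝ} {i : Fin n} (E : Finset (Fin n) → Prop)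
    (hE : ∀ T, E T → i ∈ T) :
    prE q E = q i * prE (Function.update q i 1) E := by
  unfold prE
  rw [Finset.mul_sum]
  refine Finset.sum_congr rfl fun T _ => ?_
  by_cases hET : E T
  · rw [if_pos hET, if_pos hET, prodP_update_one (hE T hET)]
  · rw [if_neg hET, if_neg hET, mul_zero]

set_option maxHeartbeats 1000000 in
/-- for `x` feasible for the strengthened LP,
`Pr[i ∈ Alt'(S) | i ∈ S] ≥ (1 - (1/(αk))(1 + (2/(αk))^{1/3}))^k` (stated in
multiplied-out form; note `i ∈ Alt'(S)` implies `i ∈ S`). -/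
theorem survival_bound_fkg (n m k : ℕ) (s : Fin n → Fin m → ℝ)
    (hs : ∀ i j, s i j ∈ Set.Icc (0:ℝ) 1)
    (hsparse : ∀ i, ((univ : Finset (Fin m)).filter (fun j => 0 < s i j)).card ≤ k)
    (x : Fin n → ℝ) (hx : ∀ i, x i ∈ Set.Icc (0:ℝ) 1)
    (hLP : ∀ j, ∑ i, s i j * x i ≤ 1)
    (hLPbig : ∀ j, ∑ i ∈ univ.filter (fun i => 1/2 < s i j), x i ≤ 1)
    (α : ℝ) (hα : 0 < α) (hαk : 2 ≤ α * k)
    (q : Fin n → ℝ) (hq : ∀ i, q i = x i / (α * k))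
    (i : Fin n) :
    prE q (fun T => i ∈ altSet' s T)
      ≥ (1 - (1 / (α * k)) * (1 + (2 / (α * k)) ^ ((1:ℝ)/3)))^k
          * prE q (fun T => i ∈ T) := by
  have hαk0 : (0:ℝ) < α * k := lt_of_lt_of_le (by norm_num) hαk
  set cval : ℝ := 1 - (1 / (α * k)) * (1 + (2 / (α * k)) ^ ((1:ℝ)/3)) with hcval
  have hqb : ∀ i', q i' ∈ Set.Icc (0:ℝ) 1 := fun i' => by
    rw [hq i']
    constructor
    · exact div_nonneg (hx i').1 hαk0.le
    · rw [div_le_one hαk0]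
      linarith [(hx i').2]
  have hmem : ∀ T, i ∈ altSet' s T → i ∈ T := by
    intro T hT
    unfold altSet' at hT
    exact (Finset.mem_filter.mp hT).1
  rw [ge_iff_le, prE_mem hqb i, prE_cond (fun T => i ∈ altSet' s T) hmem]
  set q' : Fin n → ℝ := Function.update q i 1 with hq'def
  have hq'i : q' i = 1 := Function.update_self i 1 q
  have hq'o : ∀ i', i' ≠ i → q' i' = x i' / (α * k) := by
    intro i' h
    rw [hq'def, Function.update_of_ne h, hq i']
  have hq'b : ∀ i', q' i' ∈ Set.Icc (0:ℝ) 1 := by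
    intro i'
    by_cases h : i' = i
    · subst h; rw [hq'i]; constructor <;> norm_num
    · rw [hq'o i' h]
      constructor
      · exact div_nonneg (hx i').1 hαk0.le
      · rw [div_le_one hαk0]
        linarith [(hx i').2]
  -- constants
  have hC2 : 1/(α*k) ≤ 1/2 := by
    rw [div_le_div_iff₀ hαk0 (by norm_num : (0:ℝ) < 2)]
    linarith
  have hC0 : (0:ℝ) ≤ 1/(α*k) := by positivity
  have ht0 : (0:ℝ) ≤ (2/(α*k)) ^ ((1:ℝ)/3) := Real.rpow_nonneg (by positivity) _
  have ht1 : (2/(α*k)) ^ ((1:ℝ)/3) ≤ 1 :=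
    Real.rpow_le_one (by positivity) (by rw [div_le_one hαk0]; linarith) (by norm_num)
  have hcval0 : 0 ≤ cval := by rw [hcval]; nlinarith [hC2, ht1, hC0, ht0]
  have hcval1 : cval ≤ 1 := by rw [hcval]; nlinarith [hC0, ht0]
  -- events
  have hAdec : ∀ j : Fin m, ∀ ⦃T T' : Finset (Fin n)⦄, T ⊆ T' →
      ((∑ i' ∈ T'.filter (fun i'' => s i j ≤ s i'' j), s i' j) ≤ 1) →
      ((∑ i' ∈ T.filter (fun i'' => s i j ≤ s i'' j), s i' j) ≤ 1) := by
    intro j T T' hsub hT'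
    refine le_trans (Finset.sum_le_sum_of_subset_of_nonneg ?_ fun b _ _ => (hs b j).1) hT'
    exact Finset.filter_subset_filter _ hsub
  set N : Finset (Fin m) := univ.filter (fun j => 0 < s i j) with hNdef
  have hmain : cval ^ k
      ≤ prE q' (fun T => i ∈ altSet' s T) := by
    have h0 : prE q' (fun T => i ∉ T) = 0 := by
      have h1 := prE_add_compl (q := q') (fun T => i ∈ T)
      rw [prE_mem hq'b i, hq'i] at h1
      linarith
    calc cval ^ k ≤ cval ^ N.card := pow_le_pow_of_le_one hcval0 hcval1 (hsparse i)
      _ = ∏ _j ∈ N, cval := by rw [Finset.prod_const]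
      _ ≤ ∏ j ∈ N, prE q'
            (fun T => (∑ i' ∈ T.filter (fun i'' => s i j ≤ s i'' j), s i' j) ≤ 1) := by
          refine Finset.prod_le_prod (fun j _ => hcval0) (fun j hjN => ?_)
          have hj : 0 < s i j := (Finset.mem_filter.mp hjN).2
          exact constraint_bound s hs x hx hLP hLPbig α hα k hαk i q' hq'i hq'o hq'b j hj
      _ ≤ prE q' (fun T => ∀ j ∈ N,
            (∑ i' ∈ T.filter (fun i'' => s i j ≤ s i'' j), s i' j) ≤ 1) :=
          fkg_prod hq'b _ hAdec N
      _ ≤ prE q' (fun T => i ∈ altSet' s T) := by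
          have hsplit := prE_subadd hq'b
            (E := fun T => ∀ j ∈ N,
              (∑ i' ∈ T.filter (fun i'' => s i j ≤ s i'' j), s i' j) ≤ 1)
            (F := fun T => i ∈ altSet' s T) (G := fun T => i ∉ T) ?_
          · linarith [hsplit, h0]
          · intro T hT
            by_cases hiT : i ∈ T
            · left
              unfold altSet'
              refine Finset.mem_filter.mpr ⟨hiT, fun j hj => ?_⟩
              exact hT j (Finset.mem_filter.mpr ⟨Finset.mem_univ _, hj⟩)
            · right
              exact hiT
  calc cval ^ k * q i ≤ prE q' (fun T => i ∈ altSet' s T) * q i :=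
        mul_le_mul_of_nonneg_right hmain (hqb i).1
    _ = q i * prE q' (fun T => i ∈ altSet' s T) := mul_comm _ _
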